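/- In the category O_d of oriented Kauffman diagrams with loop parameter d, the endomorphism space End(X^w) of the object associated to a word w in {X, X*} is one-dimensional if and only if w = X^n or w = (X*)^n for some n ≥ 0 (i.e., w uses only one of the two letters). -/

import Mathlib

/-!
Words in the letters `{X, X*}` (elements of the free product monoid `ℕ * ℕ`) are
modeled as `List Bool`, with `true` standing for the letter `X` and `false` for `X*`.
An oriented Kauffman diagram of type `(w, w')` is a Kauffman diagram with
`w.length` top endpoints and `w'.length` bottom endpoints, each string oriented,
such that the top endpoints are labeled (outgoing = `X`, incoming = `X*`) spelling
`w`, and the bottom endpoints are labeled (incoming = `X`, outgoing = `X*`)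
spelling `w'`.
-/

/-- Position of the `i`-th boundary point in the cyclic order around the boundary of
the rectangle (top points left to right, then bottom points right to left). -/
def boundaryPos (m n : ℕ) (i : Fin (m + n)) : ℕ :=
  if (i : ℕ) < m then (i : ℕ) else m + n - 1 - ((i : ℕ) - m)

/-- A Kauffman diagram of type `(m, n)`: a planar (non-crossing) pairing of the
`m` top points and `n` bottom points by disjoint strings, each boundary point lying
on exactly one string. -/
structure KauffmanDiagram (m n : ℕ) where
  /-- the matching: `match' i` is the other endpoint of the string through `i` -/
  match' : Fin (m + n) → Fin (m + n)
  invol : ∀ i, match' (match' i) = i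
  noFix : ∀ i, match' i ≠ i
  noncross : ∀ a b : Fin (m + n),
    ¬ (boundaryPos m n a < boundaryPos m n b ∧
       boundaryPos m n b < boundaryPos m n (match' a) ∧
       boundaryPos m n (match' a) < boundaryPos m n (match' b))

/-- The set of strings of a Kauffman diagram, each string recorded as the (unordered)
pair of its two endpoints. -/
def KauffmanDiagram.strings {m n : ℕ} (D : KauffmanDiagram m n) :
    Finset (Finset (Fin (m + n))) :=
  Finset.univ.image fun i => ({i, D.match' i} : Finset (Fin (m + n)))

/-- An orientation of a Kauffman diagram: an independent choice of direction for each
string, recorded by marking exactly one endpoint of each string as its source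
(`o i = true` iff the string starts at `i`). -/
def KauffmanDiagram.Orientation {m n : ℕ} (D : KauffmanDiagram m n) : Type :=
  { o : Fin (m + n) → Bool // ∀ i, o (D.match' i) = !(o i) }

/-- An oriented Kauffman diagram of type `(w, w')` for words `w, w' : List Bool`
(`true` = `X`, `false` = `X*`): the underlying diagram has `w.length` top points and
`w'.length` bottom points; `o i = true` iff the string through the boundary point `i`
starts (is outgoing) there.  A top point is labeled `X` iff it is outgoing, and a
bottom point is labeled `X` iff it is incoming. -/
structure OrientedKauffmanDiagram (w w' : List Bool) where
  toDiagram : KauffmanDiagram w.length w'.length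
  o : Fin (w.length + w'.length) → Bool
  flip : ∀ i, o (toDiagram.match' i) = !(o i)
  topLabel : ∀ i : Fin w.length, w.get i = o (Fin.castAdd w'.length i)
  botLabel : ∀ j : Fin w'.length, w'.get j = !(o (Fin.natAdd w.length j))


def idF (ℓ k : ℕ) : ℕ := if k < ℓ then k + ℓ else k - ℓ

lemma boundaryPos_eq (ℓ : ℕ) (k : Fin (ℓ + ℓ)) :
    boundaryPos ℓ ℓ k = if (k : ℕ) < ℓ then (k : ℕ) else ℓ + ℓ - 1 - ((k : ℕ) - ℓ) := rfl

lemma noncross_helper {ℓ : ℕ} (f : Fin (ℓ+ℓ) → Fin (ℓ+ℓ))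
    (h : ∀ k : Fin (ℓ+ℓ),
      (boundaryPos ℓ ℓ k + boundaryPos ℓ ℓ (f k) = ℓ+ℓ-1) ∨
      (boundaryPos ℓ ℓ (f k) = boundaryPos ℓ ℓ k + 1) ∨
      (boundaryPos ℓ ℓ k = boundaryPos ℓ ℓ (f k) + 1)) :
    ∀ a b, ¬ (boundaryPos ℓ ℓ a < boundaryPos ℓ ℓ b ∧
       boundaryPos ℓ ℓ b < boundaryPos ℓ ℓ (f a) ∧
       boundaryPos ℓ ℓ (f a) < boundaryPos ℓ ℓ (f b)) := by
  rintro a b ⟨h1, h2, h3⟩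
  rcases h a with ha | ha | ha <;> rcases h b with hb | hb | hb <;> omega

def idDiagram (ℓ : ℕ) : KauffmanDiagram ℓ ℓ where
  match' k := ⟨idF ℓ k, by have := k.isLt; simp only [idF]; split_ifs <;> omega⟩
  invol k := by
    have := k.isLt
    apply Fin.ext
    simp only [idF]
    split_ifs <;> omega
  noFix k h := by
    have hk := k.isLt
    have := congrArg Fin.val h
    simp only [idF] at this
    split_ifs at this <;> omega
  noncross := by
    apply noncross_helper
    intro k
    have := k.isLt
    left
    simp only [boundaryPos_eq, idF]
    split_ifs <;> omega

def oFun (w : List Bool) (k : Fin (w.length + w.length)) : Bool :=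
  if h : (k : ℕ) < w.length then w.get ⟨k, h⟩
  else !w.get ⟨(k : ℕ) - w.length, by have := k.isLt; omega⟩

lemma get_congr (w : List Bool) {a b : ℕ} (ha : a < w.length) (hb : b < w.length)
    (h : a = b) : w.get ⟨a, ha⟩ = w.get ⟨b, hb⟩ := by subst h; rfl

def idOriented (w : List Bool) : OrientedKauffmanDiagram w w where
  toDiagram := idDiagram w.length
  o := oFun w
  flip k := by
    have hk := k.isLt
    show oFun w ⟨idF w.length k, _⟩ = !(oFun w k)
    rcases lt_or_ge (k : ℕ) w.length with h | h
    · simp only [oFun, idF, if_pos h]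
      rw [dif_pos h, dif_neg (by omega : ¬ ((k : ℕ) + w.length < w.length))]
      exact congrArg (!·) (get_congr w _ _ (by omega))
    · have h1 : ¬ ((k : ℕ) < w.length) := by omega
      simp only [oFun, idF, if_neg h1]
      rw [dif_neg h1, dif_pos (by omega : (k : ℕ) - w.length < w.length)]
      simp
  topLabel i := by
    show _ = oFun w _
    simp only [oFun, Fin.coe_castAdd]
    rw [dif_pos i.isLt]
  botLabel j := by
    show _ = !(oFun w _)
    have : ¬ ((Fin.natAdd w.length j : ℕ) < w.length) := by simp
    simp only [oFun]
    rw [dif_neg this]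
    simp only [Bool.not_not, Fin.coe_natAdd]
    exact get_congr w _ _ (by omega)

def capF (ℓ i k : ℕ) : ℕ :=
  if k = i then i+1 else if k = i+1 then i
  else if k = ℓ+i then ℓ+i+1 else if k = ℓ+i+1 then ℓ+i else idF ℓ k

set_option maxHeartbeats 1600000 in
def capDiagram (ℓ i : ℕ) (hi : i + 1 < ℓ) : KauffmanDiagram ℓ ℓ where
  match' k := ⟨capF ℓ i k, by have := k.isLt; simp only [capF, idF]; split_ifs <;> omega⟩
  invol k := by
    have := k.isLt
    apply Fin.ext
    show capF ℓ i (capF ℓ i k) = (k : ℕ)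
    simp only [capF, idF]
    split_ifs <;> omega
  noFix k h := by
    have hk := k.isLt
    have := congrArg Fin.val h
    simp only [capF, idF] at this
    split_ifs at this <;> omega
  noncross := by
    apply noncross_helper
    intro k
    have := k.isLt
    show _ ∨ boundaryPos ℓ ℓ ⟨capF ℓ i k, _⟩ = _ + 1 ∨ _ = boundaryPos ℓ ℓ ⟨capF ℓ i k, _⟩ + 1
    rcases eq_or_ne (k:ℕ) i with h0 | h0
    · right; left
      simp only [boundaryPos_eq, capF, if_pos h0]
      split_ifs <;> omega
    rcases eq_or_ne (k:ℕ) (i+1) with h1 | h1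
    · right; right
      simp only [boundaryPos_eq, capF, if_neg h0, if_pos h1]
      split_ifs <;> omega
    rcases eq_or_ne (k:ℕ) (ℓ+i) with h2 | h2
    · right; right
      simp only [boundaryPos_eq, capF, if_neg h0, if_neg h1, if_pos h2]
      split_ifs <;> omega
    rcases eq_or_ne (k:ℕ) (ℓ+i+1) with h3 | h3
    · right; left
      simp only [boundaryPos_eq, capF, if_neg h0, if_neg h1, if_neg h2, if_pos h3]
      split_ifs <;> omega
    · left
      simp only [boundaryPos_eq, capF, idF, if_neg h0, if_neg h1, if_neg h2, if_neg h3]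
      split_ifs <;> omega

lemma capOk (w : List Bool) (i : ℕ) (hi : i + 1 < w.length)
    (hne : w.get ⟨i, by omega⟩ ≠ w.get ⟨i+1, by omega⟩) :
    ∀ k : Fin (w.length + w.length),
      oFun w ((capDiagram w.length i hi).match' k) = !(oFun w k) := by
  intro k
  have hk := k.isLt
  have hip : w.get ⟨i+1, by omega⟩ = !w.get ⟨i, by omega⟩ := by
    revert hne; cases w.get ⟨i, by omega⟩ <;> cases w.get ⟨i+1, by omega⟩ <;> simp
  show oFun w ⟨capF w.length i k, _⟩ = !(oFun w k)
  rcases eq_or_ne (k:ℕ) i with h0 | h0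
  · simp only [oFun, capF, if_pos h0]
    rw [dif_pos (by omega), dif_pos (by omega)]
    rw [get_congr w (by omega) (by omega) h0]
    exact hip
  rcases eq_or_ne (k:ℕ) (i+1) with h1 | h1
  · simp only [oFun, capF, if_neg h0, if_pos h1]
    rw [dif_pos (by omega), dif_pos (by omega)]
    rw [get_congr w (by omega) (by omega) h1, hip]
    simp
  rcases eq_or_ne (k:ℕ) (w.length+i) with h2 | h2
  · simp only [oFun, capF, if_neg h0, if_neg h1, if_pos h2]
    rw [dif_neg (by omega), dif_neg (by omega)]
    rw [get_congr w (by omega) (by omega) (by omega : w.length+i+1-w.length = i+1),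
        get_congr w (by omega) (by omega) (by omega : (k:ℕ)-w.length = i)]
    rw [hip]
  rcases eq_or_ne (k:ℕ) (w.length+i+1) with h3 | h3
  · simp only [oFun, capF, if_neg h0, if_neg h1, if_neg h2, if_pos h3]
    rw [dif_neg (by omega), dif_neg (by omega)]
    rw [get_congr w (by omega) (by omega) (by omega : w.length+i-w.length = i),
        get_congr w (by omega) (by omega) (by omega : (k:ℕ)-w.length = i+1)]
    rw [hip]
    simp
  · simp only [oFun, capF, if_neg h0, if_neg h1, if_neg h2, if_neg h3]
    exact (idOriented w).flip k

def capOriented (w : List Bool) (i : ℕ) (hi : i + 1 < w.length)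
    (hne : w.get ⟨i, by omega⟩ ≠ w.get ⟨i+1, by omega⟩) : OrientedKauffmanDiagram w w where
  toDiagram := capDiagram w.length i hi
  o := oFun w
  flip := capOk w i hi hne
  topLabel := (idOriented w).topLabel
  botLabel := (idOriented w).botLabel

lemma okd_ext {w w' : List Bool} {D D' : OrientedKauffmanDiagram w w'}
    (h1 : D.toDiagram.match' = D'.toDiagram.match') (h2 : D.o = D'.o) : D = D' := by
  obtain ⟨⟨m1, i1, n1, c1⟩, o1, f1, t1, b1⟩ := D
  obtain ⟨⟨m2, i2, n2, c2⟩, o2, f2, t2, b2⟩ := D'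
  simp only at h1 h2
  subst h1; subst h2
  rfl

lemma exists_adjacent_ne (w : List Bool) (h1 : ∀ n, w ≠ List.replicate n true)
    (h2 : ∀ n, w ≠ List.replicate n false) :
    ∃ i, ∃ h : i + 1 < w.length, w.get ⟨i, by omega⟩ ≠ w.get ⟨i+1, h⟩ := by
  induction w with
  | nil => exact absurd rfl (h1 0)
  | cons a t ih =>
    cases t with
    | nil =>
      cases a
      · exact absurd rfl (h2 1)
      · exact absurd rfl (h1 1)
    | cons b t' =>
      by_cases hab : a = b
      · subst hab
        have key : ∀ (c : Bool), (∀ n, a :: a :: t' ≠ List.replicate n c) →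
            ∀ n, a :: t' ≠ List.replicate n c := by
          intro c hc n hn
          cases n with
          | zero => simp at hn
          | succ m =>
            rw [List.replicate_succ] at hn
            simp only [List.cons.injEq] at hn
            exact hc (m+2) (by rw [List.replicate_succ, List.replicate_succ]
                               simp [hn.1, hn.2])
        obtain ⟨i, hlt, hne⟩ := ih (key true h1) (key false h2)
        exact ⟨i+1, by simpa using hlt, hne⟩
      · exact ⟨0, by simp [Nat.succ_le_iff], hab⟩

lemma o_eq_oFun {w : List Bool} (D : OrientedKauffmanDiagram w w) : D.o = oFun w := by
  funext k
  have hk := k.isLt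
  rcases lt_or_ge (k : ℕ) w.length with h | h
  · have ht := D.topLabel ⟨k, h⟩
    have heq : (Fin.castAdd w.length (⟨(k : ℕ), h⟩ : Fin w.length)) = k := by
      apply Fin.ext; simp
    rw [heq] at ht
    rw [oFun, dif_pos h, ← ht]
  · have hb := D.botLabel ⟨(k : ℕ) - w.length, by omega⟩
    have heq : (Fin.natAdd w.length (⟨(k : ℕ) - w.length, by omega⟩ : Fin w.length)) = k := by
      apply Fin.ext; simp; omega
    rw [heq] at hb
    rw [oFun, dif_neg (by omega)]
    rw [hb]
    simp

lemma get_const {w : List Bool} {c : Bool} (hw : w = List.replicate w.length c)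
    (i : Fin w.length) : w.get i = c := by
  rw [List.get_of_eq hw, List.get_eq_getElem, List.getElem_replicate]

lemma match_top {w : List Bool} {c : Bool} (hw : w = List.replicate w.length c)
    (D : OrientedKauffmanDiagram w w) (k : Fin (w.length + w.length)) (h : (k : ℕ) < w.length) :
    w.length ≤ (D.toDiagram.match' k : ℕ) := by
  by_contra hlt
  push_neg at hlt
  have hf := D.flip k
  rw [o_eq_oFun D] at hf
  simp only [oFun] at hf
  rw [dif_pos hlt, dif_pos h, get_const hw, get_const hw] at hf
  simp at hf

lemma match_eq_id {w : List Bool} {c : Bool} (hw : w = List.replicate w.length c)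
    (D : OrientedKauffmanDiagram w w) :
    ∀ k, D.toDiagram.match' k = (idDiagram w.length).match' k := by
  have hmt : ∀ k : Fin (w.length + w.length), (k : ℕ) < w.length →
      w.length ≤ (D.toDiagram.match' k : ℕ) := match_top hw D
  set ℓ := w.length with hℓ
  let M : ℕ → ℕ := fun j =>
    if h : j < ℓ + ℓ then (D.toDiagram.match' ⟨j, h⟩ : ℕ) else j
  have hM : ∀ k : Fin (ℓ + ℓ), M (k : ℕ) = (D.toDiagram.match' k : ℕ) := by
    intro k
    show dite _ _ _ = _
    rw [dif_pos k.isLt]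
  have hMrange : ∀ k : Fin (ℓ + ℓ), (k : ℕ) < ℓ → ℓ ≤ M (k : ℕ) ∧ M (k : ℕ) < ℓ + ℓ := by
    intro k h
    rw [hM k]
    exact ⟨hmt k h, (D.toDiagram.match' k).isLt⟩
  have hmono : ∀ ka kb : Fin (ℓ + ℓ), (ka : ℕ) < (kb : ℕ) → (kb : ℕ) < ℓ →
      M (ka : ℕ) < M (kb : ℕ) := by
    intro ka kb hab hb
    have ha : (ka : ℕ) < ℓ := by omega
    have h1 := hMrange ka ha
    have h2 := hMrange kb hb
    have h1' := hM ka
    have h2' := hM kb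
    by_contra hle
    push_neg at hle
    rcases eq_or_lt_of_le hle with heq | hlt
    · have hmm : D.toDiagram.match' ka = D.toDiagram.match' kb := by
        apply Fin.ext; omega
      have h3 := congrArg D.toDiagram.match' hmm
      rw [D.toDiagram.invol, D.toDiagram.invol] at h3
      have h4 := congrArg Fin.val h3
      omega
    · apply D.toDiagram.noncross ka kb
      have e1 : boundaryPos ℓ ℓ ka = (ka : ℕ) := by
        rw [boundaryPos_eq]; exact if_pos ha
      have e2 : boundaryPos ℓ ℓ kb = (kb : ℕ) := by
        rw [boundaryPos_eq]; exact if_pos hb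
      have e3 : boundaryPos ℓ ℓ (D.toDiagram.match' ka)
          = ℓ + ℓ - 1 - ((D.toDiagram.match' ka : ℕ) - ℓ) := by
        rw [boundaryPos_eq, if_neg (by omega)]
      have e4 : boundaryPos ℓ ℓ (D.toDiagram.match' kb)
          = ℓ + ℓ - 1 - ((D.toDiagram.match' kb : ℕ) - ℓ) := by
        rw [boundaryPos_eq, if_neg (by omega)]
      rw [e1, e2, e3, e4]
      refine ⟨hab, by omega, by omega⟩
  have hmono' : ∀ a b : ℕ, a < b → b < ℓ → M a < M b := by
    intro a b hab hb
    exact hmono ⟨a, by omega⟩ ⟨b, by omega⟩ hab hb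
  have hMrange' : ∀ j, j < ℓ → ℓ ≤ M j ∧ M j < ℓ + ℓ := by
    intro j h
    exact hMrange ⟨j, by omega⟩ h
  have up : ∀ j, j < ℓ → ℓ + j ≤ M j := by
    intro j
    induction j with
    | zero => intro h; have := hMrange' 0 h; omega
    | succ n ih =>
      intro h
      have := hmono' n (n+1) (by omega) h
      have := ih (by omega)
      omega
  have down : ∀ d j, j < ℓ → ℓ - 1 - j = d → M j ≤ ℓ + j := by
    intro d
    induction d with
    | zero =>
      intro j hj hd
      have := hMrange' j hj
      omega
    | succ n ih =>
      intro j hj hd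
      have h1 := hmono' j (j+1) (by omega) (by omega)
      have h2 := ih (j+1) (by omega) (by omega)
      omega
  have hval : ∀ k : Fin (ℓ + ℓ), (k : ℕ) < ℓ →
      (D.toDiagram.match' k : ℕ) = ℓ + (k : ℕ) := by
    intro k hk
    rw [← hM k]
    exact le_antisymm (down (ℓ - 1 - (k : ℕ)) (k : ℕ) hk rfl) (up (k : ℕ) hk)
  intro k
  have hk := k.isLt
  rcases lt_or_ge (k : ℕ) ℓ with h | h
  · apply Fin.ext
    rw [hval k h]
    show _ = idF ℓ (k : ℕ)
    rw [idF, if_pos h]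
    omega
  · have hmk : D.toDiagram.match' ⟨(k : ℕ) - ℓ, by omega⟩ = k := by
      apply Fin.ext
      rw [hval ⟨(k : ℕ) - ℓ, by omega⟩ (by simpa using Nat.sub_lt_left_of_lt_add h (by omega))]
      show ℓ + ((k : ℕ) - ℓ) = (k : ℕ)
      omega
    have h5 := congrArg D.toDiagram.match' hmk
    rw [D.toDiagram.invol] at h5
    rw [← h5]
    apply Fin.ext
    show ((k : ℕ) - ℓ) = idF ℓ (k : ℕ)
    rw [idF, if_neg (by omega)]

lemma unique_of_const {w : List Bool} {c : Bool} (hw : w = List.replicate w.length c)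
    (D D' : OrientedKauffmanDiagram w w) : D = D' := by
  apply okd_ext
  · funext k
    rw [match_eq_id hw D k, match_eq_id hw D' k]
  · rw [o_eq_oFun D, o_eq_oFun D']


/-- In the oriented Kauffman category `O_d`, the endomorphism space
`End(X^w) = ℂ[K_{w,w}]` (the free complex vector space on oriented Kauffman diagrams
of type `(w, w)`) is one-dimensional if and only if `w = X^n` or `w = (X*)^n` for
some `n ≥ 0`, i.e. iff `w` uses only one of the two letters. -/
theorem endomorphism_space_one_dimensional_iff (w : List Bool) :
    Module.rank ℂ (OrientedKauffmanDiagram w w →₀ ℂ) = 1 ↔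
      ((∃ n : ℕ, w = List.replicate n true) ∨ (∃ n : ℕ, w = List.replicate n false)) := by
  rw [rank_finsupp_self', Cardinal.eq_one_iff_unique]
  constructor
  · rintro ⟨hsub, -⟩
    by_contra hcon
    push_neg at hcon
    obtain ⟨h1, h2⟩ := hcon
    obtain ⟨i, hi, hne⟩ := exists_adjacent_ne w (fun n => by
        intro hn; exact h1 n hn) (fun n => by intro hn; exact h2 n hn)
    have heq : idOriented w = capOriented w i hi hne := hsub.allEq _ _
    have hm := congrArg
      (fun D : OrientedKauffmanDiagram w w =>
        (D.toDiagram.match' ⟨i, by omega⟩ : ℕ)) heq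
    simp only [idOriented, capOriented, idDiagram, capDiagram] at hm
    rw [show idF w.length i = i + w.length from by rw [idF, if_pos (by omega)]] at hm
    rw [show capF w.length i i = i + 1 from by rw [capF, if_pos rfl]] at hm
    omega
  · rintro (⟨n, hn⟩ | ⟨n, hn⟩)
    · have hw : w = List.replicate w.length true := by
        rw [hn]; simp
      exact ⟨⟨unique_of_const hw⟩, ⟨idOriented w⟩⟩
    · have hw : w = List.replicate w.length false := by
        rw [hn]; simp
      exact ⟨⟨unique_of_const hw⟩, ⟨idOriented w⟩⟩
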